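/- Let f(n,k) = k²((n−k+1)²−1)√(2k²−1), g(n,k) = k(k−1)(n−3k+2)(n−k)√(2k²−1), and h(n,k) = (k−1)((n−k−1)²−1)√(nk+k²) be real-valued functions of positive reals n, k. Then for any sequences (nⱼ), (kⱼ) of positive reals with kⱼ → ∞ and nⱼ/kⱼ → ∞, the ratio (f(nⱼ,kⱼ) + g(nⱼ,kⱼ) + h(nⱼ,kⱼ)) / (2√2·kⱼ³·nⱼ² + kⱼ^{3/2}·nⱼ^{5/2}) tends to 1. -/

import Mathlib

open Filter Real

/-- In the DMC analysis of spatial convolution, the sum of the kernel-reuse,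
row-wise-reuse and column-wise-reuse costs is asymptotically equivalent to
`2√2·k³·n² + k^{3/2}·n^{5/2}` in the regime `k → ∞`, `n/k → ∞`. -/
theorem dmc_conv_asymptotic
    (n k : ℕ → ℝ) (hn : ∀ j, 0 < n j) (hk : ∀ j, 0 < k j)
    (hk_top : Tendsto k atTop atTop)
    (hnk_top : Tendsto (fun j => n j / k j) atTop atTop) :
    Tendsto (fun j =>
      ((k j) ^ 2 * ((n j - k j + 1) ^ 2 - 1) * Real.sqrt (2 * (k j) ^ 2 - 1)
        + (k j) * (k j - 1) * (n j - 3 * k j + 2) * (n j - k j) * Real.sqrt (2 * (k j) ^ 2 - 1)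
        + (k j - 1) * ((n j - k j - 1) ^ 2 - 1) * Real.sqrt (n j * k j + (k j) ^ 2))
      / (2 * Real.sqrt 2 * (k j) ^ 3 * (n j) ^ 2
          + (k j) ^ ((3 : ℝ) / 2) * (n j) ^ ((5 : ℝ) / 2)))
      atTop (nhds 1) := by
  -- abbreviations
  set f : ℕ → ℝ := fun j =>
    (k j) ^ 2 * ((n j - k j + 1) ^ 2 - 1) * Real.sqrt (2 * (k j) ^ 2 - 1) with hf_def
  set g : ℕ → ℝ := fun j =>
    (k j) * (k j - 1) * (n j - 3 * k j + 2) * (n j - k j) * Real.sqrt (2 * (k j) ^ 2 - 1)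
    with hg_def
  set h : ℕ → ℝ := fun j =>
    (k j - 1) * ((n j - k j - 1) ^ 2 - 1) * Real.sqrt (n j * k j + (k j) ^ 2) with hh_def
  set A : ℕ → ℝ := fun j => 2 * Real.sqrt 2 * (k j) ^ 3 * (n j) ^ 2 with hA_def
  set B : ℕ → ℝ := fun j => (k j) ^ ((3 : ℝ) / 2) * (n j) ^ ((5 : ℝ) / 2) with hB_def
  have sqrt2_pos : (0:ℝ) < Real.sqrt 2 := Real.sqrt_pos.2 (by norm_num)
  have hApos : ∀ j, 0 < A j := fun j => by
    have := hn j; have := hk j; positivity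
  have hBpos : ∀ j, 0 < B j := fun j => by
    have := hn j; have := hk j; positivity
  have hone : Tendsto (fun _ : ℕ => (1:ℝ)) atTop (nhds 1) := tendsto_const_nhds
  -- basic limits
  have hn_ge : ∀ᶠ j in atTop, k j ≤ n j := by
    filter_upwards [hnk_top.eventually_ge_atTop 1] with j hj
    exact (one_le_div (hk j)).1 hj
  have hn_top : Tendsto n atTop atTop := tendsto_atTop_mono' _ hn_ge hk_top
  have hek : Tendsto (fun j => 1 / k j) atTop (nhds 0) := by
    simpa [one_div] using (Tendsto.congr (f₂ := fun j => (k j)⁻¹) (fun j => rfl) hk_top.inv_tendsto_atTop)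
  have hen : Tendsto (fun j => 1 / n j) atTop (nhds 0) := by
    simpa [one_div] using (Tendsto.congr (f₂ := fun j => (n j)⁻¹) (fun j => rfl) hn_top.inv_tendsto_atTop)
  have ht : Tendsto (fun j => k j / n j) atTop (nhds 0) := by
    have := hnk_top.inv_tendsto_atTop
    refine this.congr fun j => ?_
    rw [Pi.inv_apply, inv_div]
  -- square root factors
  have hsq1 : Tendsto (fun j => Real.sqrt (2 * (k j) ^ 2 - 1) / (Real.sqrt 2 * k j))
      atTop (nhds 1) := by
    have h1 : Tendsto (fun j => Real.sqrt (1 - (1 / k j) ^ 2 / 2)) atTop (nhds 1) := by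
      have h0 : Tendsto (fun j => 1 - (1 / k j) ^ 2 / 2) atTop (nhds 1) := by
        have := hone.sub ((hek.pow 2).div_const 2)
        simpa using this
      have := (Real.continuous_sqrt.tendsto 1).comp h0
      simpa [Function.comp_def] using this
    refine h1.congr' ?_
    filter_upwards [hk_top.eventually_ge_atTop 1] with j hj
    have hkpos := hk j
    have h2 : (0:ℝ) ≤ 2 * (k j) ^ 2 - 1 := by nlinarith
    rw [show (1 : ℝ) - (1 / k j) ^ 2 / 2 = (2 * (k j) ^ 2 - 1) / (2 * (k j) ^ 2) by
      field_simp]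
    rw [Real.sqrt_div h2]
    congr 1
    rw [show (2:ℝ) * (k j)^2 = 2 * (k j)^2 from rfl, Real.sqrt_mul (by norm_num : (0:ℝ) ≤ 2),
      Real.sqrt_sq hkpos.le]
  have hsq2 : Tendsto (fun j => Real.sqrt (n j * k j + (k j) ^ 2) / Real.sqrt (k j * n j))
      atTop (nhds 1) := by
    have h1 : Tendsto (fun j => Real.sqrt (1 + k j / n j)) atTop (nhds 1) := by
      have h0 : Tendsto (fun j => 1 + k j / n j) atTop (nhds 1) := by
        simpa using hone.add ht
      have := (Real.continuous_sqrt.tendsto 1).comp h0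
      simpa [Function.comp_def] using this
    refine h1.congr fun j => ?_
    have hkpos := hk j; have hnpos := hn j
    have h2 : (0:ℝ) ≤ n j * k j + (k j) ^ 2 := by positivity
    rw [show (1 : ℝ) + k j / n j = (n j * k j + (k j) ^ 2) / (k j * n j) by
      field_simp]
    rw [Real.sqrt_div h2]
  -- polynomial factors
  have hu1 : Tendsto (fun j => ((n j - k j + 1) ^ 2 - 1) / (n j) ^ 2) atTop (nhds 1) := by
    have h0 : Tendsto (fun j => (1 - k j / n j + 1 / n j) ^ 2 - (1 / n j) ^ 2)
        atTop (nhds 1) := by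
      have := (((hone.sub ht).add hen).pow 2).sub (hen.pow 2)
      simpa using this
    refine h0.congr fun j => ?_
    have hnpos := (hn j).ne'
    field_simp
    try ring
  have hu2 : Tendsto (fun j => (k j - 1) / k j) atTop (nhds 1) := by
    have h0 : Tendsto (fun j => 1 - 1 / k j) atTop (nhds 1) := by
      simpa using hone.sub hek
    refine h0.congr fun j => ?_
    have := (hk j).ne'
    field_simp
  have hu3 : Tendsto (fun j => (n j - 3 * k j + 2) / n j) atTop (nhds 1) := by
    have h0 : Tendsto (fun j => 1 - 3 * (k j / n j) + 2 * (1 / n j)) atTop (nhds 1) := by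
      have := (hone.sub (ht.const_mul 3)).add (hen.const_mul 2)
      simpa using this
    refine h0.congr fun j => ?_
    have := (hn j).ne'
    field_simp
    try ring
  have hu4 : Tendsto (fun j => (n j - k j) / n j) atTop (nhds 1) := by
    have h0 : Tendsto (fun j => 1 - k j / n j) atTop (nhds 1) := by
      simpa using hone.sub ht
    refine h0.congr fun j => ?_
    have := (hn j).ne'
    field_simp
  have hu5 : Tendsto (fun j => ((n j - k j - 1) ^ 2 - 1) / (n j) ^ 2) atTop (nhds 1) := by
    have h0 : Tendsto (fun j => (1 - k j / n j - 1 / n j) ^ 2 - (1 / n j) ^ 2)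
        atTop (nhds 1) := by
      have := (((hone.sub ht).sub hen).pow 2).sub (hen.pow 2)
      simpa using this
    refine h0.congr fun j => ?_
    have hnpos := (hn j).ne'
    field_simp
    try ring
  -- f and g over √2 k³ n²
  have hf1 : Tendsto (fun j => f j / (Real.sqrt 2 * (k j) ^ 3 * (n j) ^ 2))
      atTop (nhds 1) := by
    have := hu1.mul hsq1
    rw [one_mul] at this
    refine this.congr fun j => ?_
    have hkpos := (hk j).ne'
    have hnpos := (hn j).ne'
    rw [hf_def]
    field_simp
    try ring
  have hg1 : Tendsto (fun j => g j / (Real.sqrt 2 * (k j) ^ 3 * (n j) ^ 2))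
      atTop (nhds 1) := by
    have := ((hu2.mul hu3).mul hu4).mul hsq1
    simp only [one_mul] at this
    refine this.congr fun j => ?_
    have hkpos := (hk j).ne'
    have hnpos := (hn j).ne'
    rw [hg_def]
    field_simp
    try ring
  -- (f+g)/A → 1
  have hu : Tendsto (fun j => (f j + g j) / A j) atTop (nhds 1) := by
    have h0 := (hf1.add hg1).div_const 2
    norm_num at h0
    refine h0.congr fun j => ?_
    simp only [hA_def]
    rw [← add_div, div_div,
      show (Real.sqrt 2 * (k j) ^ 3 * (n j) ^ 2) * 2
        = 2 * Real.sqrt 2 * (k j) ^ 3 * (n j) ^ 2 from by ring]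
  -- B = k n² √(k n)
  have hB_eq : ∀ j, B j = k j * (n j) ^ 2 * Real.sqrt (k j * n j) := by
    intro j
    have hkpos := hk j; have hnpos := hn j
    simp only [hB_def]
    have e1 : (k j) ^ ((3:ℝ)/2) = k j * Real.sqrt (k j) := by
      rw [show (3:ℝ)/2 = 1 + 1/2 by norm_num, Real.rpow_add hkpos, Real.rpow_one,
        Real.sqrt_eq_rpow]
    have e2 : (n j) ^ ((5:ℝ)/2) = (n j) ^ 2 * Real.sqrt (n j) := by
      rw [show (5:ℝ)/2 = 2 + 1/2 by norm_num, Real.rpow_add hnpos, Real.sqrt_eq_rpow,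
        show (2:ℝ) = ((2:ℕ) : ℝ) by norm_num, Real.rpow_natCast]
    rw [e1, e2, Real.sqrt_mul hkpos.le]
    ring
  -- h/B → 1
  have hv : Tendsto (fun j => h j / B j) atTop (nhds 1) := by
    have := (hu2.mul hu5).mul hsq2
    simp only [one_mul] at this
    refine this.congr fun j => ?_
    have hkpos := (hk j).ne'
    have hnpos := (hn j).ne'
    have hspos : Real.sqrt (k j * n j) ≠ 0 := by
      have : (0:ℝ) < k j * n j := mul_pos (hk j) (hn j)
      exact (Real.sqrt_pos.2 this).ne'
    rw [hh_def, hB_eq j]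
    field_simp
    try ring
  -- assemble
  have key : ∀ j, (f j + g j + h j) / (A j + B j)
      = h j / B j + ((f j + g j) / A j - h j / B j) * (A j / (A j + B j)) := by
    intro j
    have hA := (hApos j).ne'
    have hB := (hBpos j).ne'
    have hAB : A j + B j ≠ 0 := by
      have := hApos j; have := hBpos j; linarith
    field_simp
    try ring
  have hw_bdd : ∀ j, |A j / (A j + B j)| ≤ 1 := by
    intro j
    have hABpos : 0 < A j + B j := add_pos (hApos j) (hBpos j)
    rw [abs_of_pos (div_pos (hApos j) hABpos)]
    rw [div_le_one hABpos]
    linarith [hBpos j]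
  have hz : Tendsto (fun j => ((f j + g j) / A j - h j / B j) * (A j / (A j + B j)))
      atTop (nhds 0) := by
    have hd : Tendsto (fun j => |(f j + g j) / A j - h j / B j|) atTop (nhds 0) := by
      have := (hu.sub hv).abs
      simpa using this
    refine squeeze_zero_norm (fun j => ?_) hd
    rw [Real.norm_eq_abs, abs_mul]
    calc |(f j + g j) / A j - h j / B j| * |A j / (A j + B j)|
        ≤ |(f j + g j) / A j - h j / B j| * 1 :=
          mul_le_mul_of_nonneg_left (hw_bdd j) (abs_nonneg _)
      _ = |(f j + g j) / A j - h j / B j| := mul_one _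
  have final : Tendsto (fun j => (f j + g j + h j) / (A j + B j)) atTop (nhds 1) := by
    have := hv.add hz
    rw [add_zero] at this
    exact this.congr fun j => (key j).symm
  exact final
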